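/- arXiv:1801.00097 — 10 statements merged into one kernel-verified Lean document; each statement's English description precedes it below -/
import Mathlib

section
/- In any distributive lattice, the entailment relation A ⊢ B defined on finite subsets by ⋀A ≤ ⋁B is reflexive ({a} ⊢ {a}), monotone (A ⊢ B, A ⊆ A', B ⊆ B' imply A' ⊢ B'), and transitive (A ∪ {x} ⊢ B and A ⊢ B ∪ {x} imply A ⊢ B). -/
theorem entails_is_entailment_relation {L : Type*} [DistribLattice L] [BoundedOrder L] [DecidableEq L] :
    (∀ a : L, ({a} : Finset L).inf id ≤ ({a} : Finset L).sup id) ∧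
    (∀ A B A' B' : Finset L, A.inf id ≤ B.sup id → A ⊆ A' → B ⊆ B' →
      A'.inf id ≤ B'.sup id) ∧
    (∀ (A B : Finset L) (x : L), (insert x A).inf id ≤ B.sup id →
      A.inf id ≤ (insert x B).sup id → A.inf id ≤ B.sup id) := by
  refine ⟨fun a => by simp, fun A B A' B' h hA hB =>
    le_trans (Finset.inf_mono hA) (le_trans h (Finset.sup_mono hB)), ?_⟩
  intro A B x h1 h2
  rw [Finset.inf_insert] at h1
  rw [Finset.sup_insert] at h2
  calc A.inf id = A.inf id ⊓ (id x ⊔ B.sup id) := (inf_eq_left.mpr h2).symm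
    _ = (id x ⊓ A.inf id) ⊔ (A.inf id ⊓ B.sup id) := by rw [inf_sup_left, inf_comm]
    _ ≤ B.sup id := sup_le h1 inf_le_right
end

section
/- A distributive lattice L is of Krull dimension ≤ n−1 (i.e. there is no strictly increasing chain of prime ideals of length n) if and only if for all x₁,…,xₙ ∈ L there exist a₁,…,aₙ ∈ L such that a₁ ∧ x₁ = 0, aᵢ₊₁ ∧ xᵢ₊₁ ≤ aᵢ ∨ xᵢ for i = 1,…,n−1, and aₙ ∨ xₙ = 1. -/
/-- A prime ideal of a bounded distributive lattice: an ideal (contains `⊥`, join-closed,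
downward closed) with `⊤ ∉ I` and `x ⊓ y ∈ I → x ∈ I ∨ y ∈ I`. -/
def IsLatticePrimeIdeal {L : Type*} [DistribLattice L] [BoundedOrder L] (I : Set L) : Prop :=
  (⊥ ∈ I ∧ (∀ x y, x ∈ I → y ∈ I → x ⊔ y ∈ I) ∧ (∀ x y, x ∈ I → y ≤ x → y ∈ I)) ∧
  ⊤ ∉ I ∧ ∀ x y : L, x ⊓ y ∈ I → x ∈ I ∨ y ∈ I

section KL

variable {L : Type*} [DistribLattice L] [BoundedOrder L]

/-- Ideal predicate. -/
def LIsIdeal (I : Set L) : Prop :=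
  ⊥ ∈ I ∧ (∀ x y, x ∈ I → y ∈ I → x ⊔ y ∈ I) ∧ (∀ x y, x ∈ I → y ≤ x → y ∈ I)

/-- Filter predicate. -/
def LIsFilter (F : Set L) : Prop :=
  ⊤ ∈ F ∧ (∀ x y, x ∈ F → y ∈ F → x ⊓ y ∈ F) ∧ (∀ x y, x ∈ F → x ≤ y → y ∈ F)

omit [BoundedOrder L] in
lemma distrib_aux (m₁ m₂ x y : L) :
    (m₁ ⊔ x) ⊓ (m₂ ⊔ y) ≤ (m₁ ⊔ m₂) ⊔ x ⊓ y := by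
  rw [inf_sup_right, inf_sup_left, inf_sup_left]
  apply sup_le (sup_le _ _) (sup_le _ _)
  · exact inf_le_left.trans (le_sup_of_le_left le_sup_left)
  · exact inf_le_left.trans (le_sup_of_le_left le_sup_left)
  · exact inf_le_right.trans (le_sup_of_le_left le_sup_right)
  · exact le_sup_right

/-- Prime separation lemma: an ideal disjoint from a filter can be enlarged to a prime
ideal still disjoint from the filter. -/
lemma prime_separation {I F : Set L} (hI : LIsIdeal I) (hF : LIsFilter F)
    (hd : ∀ z ∈ I, z ∉ F) :
    ∃ P : Set L, IsLatticePrimeIdeal P ∧ I ⊆ P ∧ ∀ z ∈ P, z ∉ F := by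
  classical
  set S : Set (Set L) := {J | LIsIdeal J ∧ I ⊆ J ∧ ∀ z ∈ J, z ∉ F} with hS
  obtain ⟨M, hIM, hMmax⟩ :
      ∃ M, I ⊆ M ∧ Maximal (· ∈ S) M := by
    apply zorn_subset_nonempty S ?_ I ⟨hI, subset_rfl, hd⟩
    intro c hcS hchain hcne
    refine ⟨⋃₀ c, ⟨⟨?_, ?_, ?_⟩, ?_, ?_⟩, fun s hs => Set.subset_sUnion_of_mem hs⟩
    · obtain ⟨s, hs⟩ := hcne
      exact ⟨s, hs, (hcS hs).1.1⟩
    · rintro x y ⟨s, hs, hxs⟩ ⟨t, ht, hyt⟩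
      rcases hchain.total hs ht with h | h
      · exact ⟨t, ht, (hcS ht).1.2.1 x y (h hxs) hyt⟩
      · exact ⟨s, hs, (hcS hs).1.2.1 x y hxs (h hyt)⟩
    · rintro x y ⟨s, hs, hxs⟩ hyx
      exact ⟨s, hs, (hcS hs).1.2.2 x y hxs hyx⟩
    · obtain ⟨s, hs⟩ := hcne
      exact ((hcS hs).2.1).trans (Set.subset_sUnion_of_mem hs)
    · rintro z ⟨s, hs, hzs⟩
      exact (hcS hs).2.2 z hzs
  obtain ⟨hMid, hIM', hMF⟩ := hMmax.1
  refine ⟨M, ⟨hMid, ?_, ?_⟩, hIM, hMF⟩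
  · intro hT
    exact hMF ⊤ hT hF.1
  · intro x y hxy
    by_contra hc
    push_neg at hc
    obtain ⟨hx, hy⟩ := hc
    -- ideal generated by M and x meets F
    have key : ∀ w : L, w ∉ M → ∃ f m, f ∈ F ∧ m ∈ M ∧ f ≤ m ⊔ w := by
      intro w hw
      set M' : Set L := {z | ∃ m ∈ M, z ≤ m ⊔ w} with hM'
      have hM'id : LIsIdeal M' := by
        refine ⟨⟨⊥, hMid.1, bot_le⟩, ?_, ?_⟩
        · rintro z₁ z₂ ⟨m₁, hm₁, h₁⟩ ⟨m₂, hm₂, h₂⟩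
          exact ⟨m₁ ⊔ m₂, hMid.2.1 _ _ hm₁ hm₂,
            sup_le (h₁.trans (sup_le (le_sup_of_le_left le_sup_left) le_sup_right))
              (h₂.trans (sup_le (le_sup_of_le_left le_sup_right) le_sup_right))⟩
        · rintro z₁ z₂ ⟨m₁, hm₁, h₁⟩ hz
          exact ⟨m₁, hm₁, hz.trans h₁⟩
      have hMM' : M ⊆ M' := fun z hz => ⟨z, hz, le_sup_left⟩
      have hwM' : w ∈ M' := ⟨⊥, hMid.1, by simp⟩
      have : M' ∉ S := by
        intro hmem
        exact hw (hMmax.2 hmem hMM' hwM')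
      simp only [hS, Set.mem_setOf_eq] at this
      push_neg at this
      obtain ⟨f, hfM', hfF⟩ := this hM'id (hIM.trans hMM')
      obtain ⟨m, hm, hfm⟩ := hfM'
      exact ⟨f, m, hfF, hm, hfm⟩
    obtain ⟨f₁, m₁, hf₁, hm₁, hle₁⟩ := key x hx
    obtain ⟨f₂, m₂, hf₂, hm₂, hle₂⟩ := key y hy
    have hfF : f₁ ⊓ f₂ ∈ F := hF.2.1 _ _ hf₁ hf₂
    have hfle : f₁ ⊓ f₂ ≤ (m₁ ⊔ m₂) ⊔ x ⊓ y :=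
      (inf_le_inf hle₁ hle₂).trans (distrib_aux m₁ m₂ x y)
    have hfM : f₁ ⊓ f₂ ∈ M :=
      hMid.2.2 _ _ (hMid.2.1 _ _ (hMid.2.1 _ _ hm₁ hm₂) hxy) hfle
    exact hMF _ hfM hfF

/-- Iterated Krull boundary ideals. -/
def Bnd (x : ℕ → L) : ℕ → Set L
  | 0 => {z | z = ⊥}
  | k + 1 => {z | ∃ a, a ⊓ x k ∈ Bnd x k ∧ z ≤ x k ⊔ a}

lemma Bnd_isIdeal (x : ℕ → L) : ∀ k, LIsIdeal (Bnd x k) := by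
  intro k
  induction k with
  | zero =>
    refine ⟨rfl, ?_, ?_⟩
    · rintro a b rfl rfl; simp [Bnd]
    · rintro a b rfl hb; simp [Bnd, le_bot_iff] at hb ⊢; exact hb
  | succ k ih =>
    refine ⟨⟨⊥, ?_, bot_le⟩, ?_, ?_⟩
    · exact ih.2.2 _ _ ih.1 (by simp)
    · rintro z₁ z₂ ⟨a₁, ha₁, h₁⟩ ⟨a₂, ha₂, h₂⟩
      refine ⟨a₁ ⊔ a₂, ?_, ?_⟩
      · rw [inf_comm, inf_sup_left]
        exact ih.2.1 _ _ (by rwa [inf_comm]) (by rwa [inf_comm])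
      · exact sup_le (h₁.trans (sup_le le_sup_left (le_sup_of_le_right le_sup_left)))
          (h₂.trans (sup_le le_sup_left (le_sup_of_le_right le_sup_right)))
    · rintro z₁ z₂ ⟨a₁, ha₁, h₁⟩ hz
      exact ⟨a₁, ha₁, hz.trans h₁⟩

lemma x_mem_Bnd (x : ℕ → L) (k : ℕ) : x k ∈ Bnd x (k + 1) :=
  ⟨⊥, by simpa using (Bnd_isIdeal x k).1, le_sup_left⟩

/-- Partial complementary chain predicate. -/
def ChainC (x a : ℕ → L) (k : ℕ) : Prop :=
  a 0 ⊓ x 0 = ⊥ ∧ ∀ i, i + 1 ≤ k → a (i + 1) ⊓ x (i + 1) ≤ a i ⊔ x i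

lemma mem_Bnd_iff (x : ℕ → L) :
    ∀ k z, z ∈ Bnd x (k + 1) ↔ ∃ a : ℕ → L, ChainC x a k ∧ z ≤ a k ⊔ x k := by
  intro k
  induction k with
  | zero =>
    intro z
    constructor
    · rintro ⟨a, ha, hz⟩
      have ha' : a ⊓ x 0 = ⊥ := ha
      exact ⟨fun _ => a, ⟨ha', fun i hi => by omega⟩, by rwa [sup_comm] at hz⟩
    · rintro ⟨a, ⟨h0, _⟩, hz⟩
      exact ⟨a 0, h0, by rwa [sup_comm]⟩
  | succ k ih =>
    intro z
    constructor
    · rintro ⟨b, hb, hz⟩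
      rw [ih] at hb
      obtain ⟨a, ⟨h0, hstep⟩, hbk⟩ := hb
      refine ⟨Function.update a (k + 1) b, ⟨?_, ?_⟩, ?_⟩
      · rwa [Function.update_of_ne (by omega)]
      · intro i hi
        rcases Nat.lt_or_ge (i + 1) (k + 1) with h | h
        · rw [Function.update_of_ne (by omega), Function.update_of_ne (by omega)]
          exact hstep i (by omega)
        · have : i = k := by omega
          subst this
          rw [Function.update_self, Function.update_of_ne (by omega)]
          exact hbk
      · rw [Function.update_self]
        rwa [sup_comm] at hz
    · rintro ⟨a, ⟨h0, hstep⟩, hz⟩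
      refine ⟨a (k + 1), ?_, by rwa [sup_comm]⟩
      rw [ih]
      exact ⟨a, ⟨h0, fun i hi => hstep i (by omega)⟩, hstep k (by omega)⟩

/-- The top filter `{⊤}` as a set. -/
lemma top_filter : LIsFilter ({z | ⊤ ≤ z} : Set L) := by
  refine ⟨le_refl _, ?_, ?_⟩
  · intro a b ha hb; exact le_inf ha hb
  · intro a b ha hab; exact ha.trans hab

/-- Step of the downward chain construction. -/
lemma step_down {x : ℕ → L} {k : ℕ} {P : Set L} (hP : IsLatticePrimeIdeal P)
    (hB : Bnd x (k + 1) ⊆ P) :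
    ∃ Q : Set L, IsLatticePrimeIdeal Q ∧ Bnd x k ⊆ Q ∧ Q ⊆ P ∧ x k ∉ Q := by
  set F : Set L := {z | ∃ q, q ∉ P ∧ q ⊓ x k ≤ z} with hF
  have hFfil : LIsFilter F := by
    refine ⟨⟨⊤, hP.2.1, le_top⟩, ?_, ?_⟩
    · rintro z₁ z₂ ⟨q₁, hq₁, h₁⟩ ⟨q₂, hq₂, h₂⟩
      refine ⟨q₁ ⊓ q₂, ?_, ?_⟩
      · intro hmem
        rcases hP.2.2 _ _ hmem with h | h
        · exact hq₁ h
        · exact hq₂ h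
      · exact le_inf ((inf_le_inf_right _ inf_le_left).trans h₁)
          ((inf_le_inf_right _ inf_le_right).trans h₂)
    · rintro z₁ z₂ ⟨q, hq, h⟩ hz
      exact ⟨q, hq, h.trans hz⟩
  have hdisj : ∀ z ∈ Bnd x k, z ∉ F := by
    rintro z hz ⟨q, hq, hle⟩
    apply hq
    apply hB
    exact ⟨q, (Bnd_isIdeal x k).2.2 _ _ hz hle, le_sup_right⟩
  obtain ⟨Q, hQ, hBQ, hQF⟩ := prime_separation (Bnd_isIdeal x k) hFfil hdisj
  refine ⟨Q, hQ, hBQ, ?_, ?_⟩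
  · intro z hzQ
    by_contra hzP
    exact hQF z hzQ ⟨z, hzP, inf_le_left⟩
  · intro hxQ
    exact hQF _ hxQ ⟨⊤, hP.2.1, inf_le_right⟩

/-- Existence of a finite descending chain of primes below a prime containing `Bnd x n`. -/
lemma chain_ex {x : ℕ → L} {n : ℕ} (htop : (⊤ : L) ∉ Bnd x n) :
    ∀ m ≤ n, ∃ R : ℕ → Set L,
      (∀ j ≤ m, IsLatticePrimeIdeal (R j)) ∧
      (∀ j, j + 1 ≤ m → R (j + 1) ⊆ R j ∧ x (n - (j + 1)) ∈ R j ∧ x (n - (j + 1)) ∉ R (j + 1)) ∧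
      Bnd x (n - m) ⊆ R m := by
  intro m
  induction m with
  | zero =>
    intro _
    obtain ⟨P, hP, hBP, _⟩ := prime_separation (Bnd_isIdeal x n) top_filter
      (fun z hz hzF => htop (by rwa [top_le_iff.mp hzF] at hz))
    exact ⟨fun _ => P, fun _ _ => hP, fun j hj => by omega, by simpa using hBP⟩
  | succ m ih =>
    intro hm
    obtain ⟨R, hRprime, hRstep, hRB⟩ := ih (by omega)
    have heq : n - m = (n - (m + 1)) + 1 := by omega
    rw [heq] at hRB
    obtain ⟨Q, hQ, hBQ, hQR, hxQ⟩ := step_down (hRprime m le_rfl) hRB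
    refine ⟨Function.update R (m + 1) Q, ?_, ?_, ?_⟩
    · intro j hj
      rcases Nat.lt_or_ge j (m + 1) with h | h
      · rw [Function.update_of_ne (by omega)]; exact hRprime j (by omega)
      · have : j = m + 1 := by omega
        subst this
        rw [Function.update_self]; exact hQ
    · intro j hj
      rcases Nat.lt_or_ge (j + 1) (m + 1) with h | h
      · rw [Function.update_of_ne (by omega), Function.update_of_ne (by omega)]
        exact hRstep j (by omega)
      · have hjm : j = m := by omega
        rw [hjm, Function.update_self, Function.update_of_ne (by omega)]
        refine ⟨hQR, ?_, hxQ⟩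
        apply hRB
        exact x_mem_Bnd x (n - (m + 1))
    · rw [Function.update_self]
      exact hBQ

/-- From failure of `⊤ ∈ Bnd x n`, get a strictly increasing chain of `n+1` primes. -/
lemma chain_of_not_top {x : ℕ → L} {n : ℕ} (htop : (⊤ : L) ∉ Bnd x n) :
    ∃ P : Fin (n + 1) → Set L, (∀ i, IsLatticePrimeIdeal (P i)) ∧ StrictMono P := by
  obtain ⟨R, hRprime, hRstep, _⟩ := chain_ex htop n le_rfl
  have hmono : ∀ a b, a ≤ b → b ≤ n → R b ⊆ R a := by
    intro a b
    induction b with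
    | zero =>
      intro hab _
      have ha0 : a = 0 := by omega
      subst ha0
      exact subset_rfl
    | succ b ihb =>
      intro hab hbn
      rcases Nat.lt_or_ge a (b + 1) with h | h
      · exact ((hRstep b (by omega)).1).trans (ihb (by omega) (by omega))
      · have hab1 : a = b + 1 := by omega
        subst hab1
        exact subset_rfl
  refine ⟨fun i => R (n - i), fun i => hRprime _ (by omega), ?_⟩
  intro i j hij
  have hi : (i : ℕ) ≤ n := by omega
  have hj : (j : ℕ) ≤ n := by omega
  have hij' : (i : ℕ) < (j : ℕ) := hij
  have hab : n - j < n - i := by omega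
  constructor
  · exact hmono _ _ (by omega) (by omega)
  · intro hsub
    obtain ⟨_, hzin, hzout⟩ := hRstep (n - j) (by omega)
    have h1 : n - j + 1 ≤ n - i := by omega
    have : x (n - (n - j + 1)) ∈ R (n - i) := hsub hzin
    exact hzout (hmono _ _ h1 (by omega) this)

end KL

theorem lattice_krullDim_le_iff {L : Type*} [DistribLattice L] [BoundedOrder L]
    (n : ℕ) (hn : 0 < n) :
    (¬ ∃ P : Fin (n + 1) → Set L, (∀ i, IsLatticePrimeIdeal (P i)) ∧ StrictMono P) ↔
    (∀ x : Fin n → L, ∃ a : Fin n → L,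
      (∀ j : Fin n, (j : ℕ) = 0 → a j ⊓ x j = ⊥) ∧
      (∀ i j : Fin n, (j : ℕ) = (i : ℕ) + 1 → a j ⊓ x j ≤ a i ⊔ x i) ∧
      (∀ j : Fin n, (j : ℕ) = n - 1 → a j ⊔ x j = ⊤)) := by
  constructor
  · -- no chain → complementary sequences exist
    intro hnochain x
    by_contra hno
    set x' : ℕ → L := fun k => x ⟨k % n, Nat.mod_lt _ hn⟩ with hx'
    have hx'eq : ∀ (k : ℕ) (h : k < n), x' k = x ⟨k, h⟩ := by
      intro k h
      simp only [hx']
      congr 1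
      exact Fin.ext (Nat.mod_eq_of_lt h)
    have htop : (⊤ : L) ∉ Bnd x' n := by
      intro htop
      obtain ⟨m, rfl⟩ : ∃ m, n = m + 1 := ⟨n - 1, by omega⟩
      rw [mem_Bnd_iff] at htop
      obtain ⟨a, ⟨h0, hstep⟩, hm⟩ := htop
      apply hno
      refine ⟨fun j => a j, ?_, ?_, ?_⟩
      · intro j hj
        show a (j : ℕ) ⊓ x j = ⊥
        have e1 : x j = x' 0 := by
          rw [hx'eq 0 (by omega)]
          congr 1
          exact Fin.ext hj
        have e2 : a (j : ℕ) = a 0 := by rw [hj]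
        rw [e1, e2]
        exact h0
      · intro i j hj
        show a (j : ℕ) ⊓ x j ≤ a (i : ℕ) ⊔ x i
        have hi : (i : ℕ) + 1 ≤ m := by omega
        have h1 : x j = x' ((i : ℕ) + 1) := by
          rw [hx'eq _ (by omega)]
          congr 1
          exact Fin.ext hj
        have h2 : x i = x' (i : ℕ) := by
          rw [hx'eq _ i.isLt]
        have e2 : a (j : ℕ) = a ((i : ℕ) + 1) := by rw [hj]
        rw [h1, h2, e2]
        exact hstep i hi
      · intro j hj
        show a (j : ℕ) ⊔ x j = ⊤
        have hjm : (j : ℕ) = m := by omega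
        have h1 : x j = x' m := by
          rw [hx'eq _ (by omega)]
          congr 1
          exact Fin.ext hjm
        have e2 : a (j : ℕ) = a m := by rw [hjm]
        rw [h1, e2]
        exact top_le_iff.mp hm
    exact hnochain (chain_of_not_top htop)
  · -- complementary sequences → no chain
    intro hcomp
    rintro ⟨P, hPprime, hPmono⟩
    -- choose x i ∈ P i.succ \ P i.castSucc
    have hx : ∀ i : Fin n, ∃ z, z ∈ P i.succ ∧ z ∉ P i.castSucc := by
      intro i
      have hlt : P i.castSucc < P i.succ := hPmono (Fin.castSucc_lt_succ (i := i))
      obtain ⟨z, hz1, hz2⟩ := Set.exists_of_ssubset hlt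
      exact ⟨z, hz1, hz2⟩
    choose x hxin hxout using hx
    obtain ⟨a, h0, hstep, hlast⟩ := hcomp x
    have hmono : ∀ i j : Fin (n + 1), i ≤ j → P i ⊆ P j := fun i j hij =>
      hPmono.monotone hij
    -- key claim by induction
    have claim : ∀ i : ℕ, (h : i < n) → a ⟨i, h⟩ ⊔ x ⟨i, h⟩ ∈ P ⟨i + 1, by omega⟩ := by
      intro i
      induction i with
      | zero =>
        intro h
        have h00 : a ⟨0, h⟩ ⊓ x ⟨0, h⟩ = ⊥ := h0 _ rfl
        have hbot : a ⟨0, h⟩ ⊓ x ⟨0, h⟩ ∈ P ⟨0, by omega⟩ := by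
          rw [h00]; exact (hPprime _).1.1
        have hcs : (⟨0, by omega⟩ : Fin (n + 1)) = (⟨0, h⟩ : Fin n).castSucc := rfl
        rcases (hPprime _).2.2 _ _ hbot with ha | hxx
        · refine (hPprime _).1.2.1 _ _ ?_ ?_
          · exact hmono ⟨0, by omega⟩ ⟨1, by omega⟩ (by simp [Fin.le_def]) ha
          · have : (⟨1, by omega⟩ : Fin (n + 1)) = (⟨0, h⟩ : Fin n).succ := rfl
            rw [this]; exact hxin _
        · exact absurd (hcs ▸ hxx) (hxout ⟨0, h⟩)
      | succ i ih =>
        intro h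
        have hih := ih (by omega)
        have hle : a ⟨i + 1, h⟩ ⊓ x ⟨i + 1, h⟩ ≤ a ⟨i, by omega⟩ ⊔ x ⟨i, by omega⟩ :=
          hstep ⟨i, by omega⟩ ⟨i + 1, h⟩ rfl
        have hmem : a ⟨i + 1, h⟩ ⊓ x ⟨i + 1, h⟩ ∈ P ⟨i + 1, by omega⟩ :=
          (hPprime _).1.2.2 _ _ hih hle
        have hcs : (⟨i + 1, by omega⟩ : Fin (n + 1)) = (⟨i + 1, h⟩ : Fin n).castSucc := rfl
        rcases (hPprime _).2.2 _ _ hmem with ha | hxx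
        · refine (hPprime _).1.2.1 _ _ ?_ ?_
          · exact hmono ⟨i + 1, by omega⟩ ⟨i + 2, by omega⟩ (by simp [Fin.le_def]) ha
          · have : (⟨i + 2, by omega⟩ : Fin (n + 1)) = (⟨i + 1, h⟩ : Fin n).succ := rfl
            rw [this]; exact hxin _
        · exact absurd (hcs ▸ hxx) (hxout ⟨i + 1, h⟩)
    have hn1 : n - 1 < n := by omega
    have hfin := claim (n - 1) hn1
    have := hlast ⟨n - 1, hn1⟩ rfl
    rw [this] at hfin
    have : n - 1 + 1 = n := by omega
    exact (hPprime _).2.1 hfin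
end

section
/- A bounded distributive lattice L has Krull dimension ≤ 0 (every strictly increasing chain of two prime ideals is impossible) if and only if L is a Boolean algebra, i.e., every element x ∈ L has a complement a with a ∧ x = 0 and a ∨ x = 1. -/
lemma isLatticePrimeIdeal_of_isPrime {L : Type*} [DistribLattice L] [BoundedOrder L]
    (J : Order.Ideal L) (h : J.IsPrime) : IsLatticePrimeIdeal (J : Set L) := by
  refine ⟨⟨J.bot_mem, fun x y hx hy => J.sup_mem hx hy, fun x y hx hyx => J.lower hyx hx⟩,
    ?_, fun x y hxy => h.mem_or_mem hxy⟩
  intro htop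
  have : (J : Set L) = Set.univ := Set.eq_univ_of_forall fun z => J.lower le_top htop
  exact h.toIsProper.ne_top (Order.Ideal.ext (by rw [this, Order.Ideal.coe_top]))

theorem lattice_dim_le_zero_iff_boolean {L : Type*} [DistribLattice L] [BoundedOrder L] :
    (¬ ∃ P₀ P₁ : Set L, IsLatticePrimeIdeal P₀ ∧ IsLatticePrimeIdeal P₁ ∧ P₀ ⊂ P₁) ↔
    (∀ x : L, ∃ a : L, a ⊓ x = ⊥ ∧ a ⊔ x = ⊤) := by
  constructor
  · intro hdim x
    by_contra hnc
    push_neg at hnc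
    -- the ideal of elements disjoint from x
    have hI : Order.IsIdeal {y : L | y ⊓ x = ⊥} := by
      refine ⟨fun a b hba ha => ?_, ⟨⊥, by simp⟩, fun a ha b hb => ⟨a ⊔ b, ?_, le_sup_left, le_sup_right⟩⟩
      · exact le_antisymm (le_trans (inf_le_inf_right x hba) ha.le) bot_le
      · simp only [Set.mem_setOf_eq] at *
        rw [inf_sup_right, ha, hb, sup_idem]
    set I : Order.Ideal L := hI.toIdeal with hIdef
    have hmemI : ∀ y : L, y ∈ I ↔ y ⊓ x = ⊥ := fun y => Iff.rfl
    -- J = I ⊔ principal x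
    set J : Order.Ideal L := I ⊔ Order.Ideal.principal x with hJdef
    have hmemJ : ∀ y : L, y ∈ J ↔ ∃ j ∈ I, y ≤ j ⊔ x :=
      fun y => DistribLattice.mem_ideal_sup_principal x y I
    have hdisj1 : Disjoint ((Order.PFilter.principal (⊤ : L)) : Set L) (J : Set L) := by
      rw [Set.disjoint_left]
      intro z hz hzJ
      have hz' : z = ⊤ := le_antisymm le_top (Order.PFilter.mem_principal.1 hz)
      subst hz'
      obtain ⟨j, hj, hj2⟩ := (hmemJ ⊤).1 hzJ
      exact hnc j ((hmemI j).1 hj) (le_antisymm le_top hj2)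
    obtain ⟨P₁, hP₁prime, hJP₁, hFP₁⟩ :=
      DistribLattice.prime_ideal_of_disjoint_filter_ideal hdisj1
    have hxP₁ : x ∈ P₁ := hJP₁ ((hmemJ x).2 ⟨⊥, I.bot_mem, by simp⟩)
    have htopP₁ : (⊤ : L) ∉ P₁ :=
      Set.disjoint_left.1 hFP₁ (Order.PFilter.mem_principal.2 le_rfl)
    -- the filter generated by the complement of P₁ together with x
    have hG : Order.IsPFilter {y : L | ∃ f, f ∉ P₁ ∧ f ⊓ x ≤ y} := by
      refine Order.IsPFilter.of_def ⟨⊤, ⊤, htopP₁, le_top⟩ ?_ ?_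
      · rintro a ⟨f, hf, hfa⟩ b ⟨g, hg, hgb⟩
        refine ⟨a ⊓ b, ⟨f ⊓ g, fun hmem => ?_, ?_⟩, inf_le_left, inf_le_right⟩
        · rcases hP₁prime.mem_or_mem hmem with h | h
          exacts [hf h, hg h]
        · exact le_inf (le_trans (inf_le_inf_right x inf_le_left) hfa)
            (le_trans (inf_le_inf_right x inf_le_right) hgb)
      · rintro a b hab ⟨f, hf, hfa⟩
        exact ⟨f, hf, hfa.trans hab⟩
    have hdisj2 : Disjoint ((hG.toPFilter : Order.PFilter L) : Set L)
        ((Order.Ideal.principal (⊥ : L)) : Set L) := by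
      rw [Set.disjoint_left]
      rintro z ⟨f, hf, hfz⟩ hz
      have hz' : z = ⊥ := le_antisymm hz bot_le
      subst hz'
      have : f ∈ I := (hmemI f).2 (le_antisymm hfz bot_le)
      exact hf (hJP₁ (le_sup_left (a := I) (b := Order.Ideal.principal x) this))
    obtain ⟨P₀, hP₀prime, _, hGP₀⟩ :=
      DistribLattice.prime_ideal_of_disjoint_filter_ideal hdisj2
    have hxP₀ : x ∉ P₀ := Set.disjoint_left.1 hGP₀ ⟨⊤, htopP₁, by simp⟩
    have hsub : (P₀ : Set L) ⊆ (P₁ : Set L) := by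
      intro y hy
      by_contra hyP₁
      exact Set.disjoint_left.1 hGP₀ ⟨y, hyP₁, inf_le_left⟩ hy
    exact hdim ⟨P₀, P₁, isLatticePrimeIdeal_of_isPrime P₀ hP₀prime,
      isLatticePrimeIdeal_of_isPrime P₁ hP₁prime,
      ⟨hsub, fun hba => hxP₀ (hba hxP₁)⟩⟩
  · rintro hcomp ⟨P₀, P₁, hP₀, hP₁, hss⟩
    have hsub := hss.subset
    obtain ⟨x, hxP₁, hxP₀⟩ := Set.exists_of_ssubset hss
    obtain ⟨a, hax, hax'⟩ := hcomp x
    have haP₀ : a ∈ P₀ := by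
      rcases hP₀.2.2 a x (by rw [hax]; exact hP₀.1.1) with h | h
      · exact h
      · exact absurd h hxP₀
    have : (⊤ : L) ∈ P₁ := by
      rw [← hax']
      exact hP₁.1.2.1 a x (hsub haP₀) hxP₁
    exact hP₁.2.1 this
end

section
/- A Heyting algebra L has Krull dimension ≤ n−1 if and only if for all x₁,…,xₙ ∈ L one has 1 = xₙ ∨ (xₙ → ( … (x₂ ∨ (x₂ → (x₁ ∨ ¬x₁))) … )). -/
/-- The nested term `xₙ ∨ (xₙ → (⋯ (x₂ ∨ (x₂ → (x₁ ∨ ¬x₁))) ⋯))`, for the list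
`[xₙ, …, x₁]` (head is outermost); note `x₁ ∨ ¬x₁ = x₁ ∨ (x₁ ⇨ ⊥)`. -/
def krullTerm {L : Type*} [HeytingAlgebra L] : List L → L
  | [] => ⊥
  | x :: xs => x ⊔ (x ⇨ krullTerm xs)

private def K' {L : Type*} [HeytingAlgebra L] (f : ℕ → L) : ℕ → L
  | 0 => ⊥
  | n + 1 => f n ⊔ (f n ⇨ K' f n)

private lemma krullTerm_ofFn {L : Type*} [HeytingAlgebra L] (f : ℕ → L) (n : ℕ) :
    krullTerm ((List.ofFn (fun i : Fin n => f i)).reverse) = K' f n := by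
  induction n with
  | zero => simp [krullTerm, K']
  | succ n ih =>
      rw [List.ofFn_succ']
      simp only [List.concat_eq_append, List.reverse_append, List.reverse_cons, List.reverse_nil,
        List.nil_append, List.cons_append, Fin.val_last, Function.comp,
        Fin.coe_castSucc]
      rw [krullTerm]

      rw [ih]
      rfl

private def bseq {L : Type*} [HeytingAlgebra L] (X : ℕ → L) : ℕ → L
  | 0 => X 0 ⇨ ⊥
  | i + 1 => X (i + 1) ⇨ (bseq X i ⊔ X i)

private lemma bseq_sup {L : Type*} [HeytingAlgebra L] (X : ℕ → L) (i : ℕ) :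
    bseq X i ⊔ X i = K' X (i + 1) := by
  induction i with
  | zero => rw [bseq, K', K']; exact sup_comm _ _
  | succ i ih => rw [bseq, ih, K']; exact sup_comm _ _

theorem heyting_dim_le_iff {L : Type*} [HeytingAlgebra L] (n : ℕ) (hn : 0 < n) :
    (∀ x : Fin n → L, ∃ a : Fin n → L,
      (∀ j : Fin n, (j : ℕ) = 0 → a j ⊓ x j = ⊥) ∧
      (∀ i j : Fin n, (j : ℕ) = (i : ℕ) + 1 → a j ⊓ x j ≤ a i ⊔ x i) ∧
      (∀ j : Fin n, (j : ℕ) = n - 1 → a j ⊔ x j = ⊤)) ↔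
    (∀ x : Fin n → L, (⊤ : L) = krullTerm (List.ofFn x).reverse) := by
  constructor
  · intro H x
    set X : ℕ → L := fun i => if h : i < n then x ⟨i, h⟩ else ⊥ with hX
    have hXeq : (fun i : Fin n => X i) = x := by
      funext i; simp [hX, i.isLt]
    have hx : ∀ (i : ℕ) (h : i < n), X i = x ⟨i, h⟩ := by
      intro i h; simp [hX, h]
    obtain ⟨a, h0, hstep, hlast⟩ := H x
    -- claim: a ⟨i⟩ ⊔ x ⟨i⟩ ≤ K' X (i+1)
    have claim : ∀ (i : ℕ) (h : i < n), a ⟨i, h⟩ ⊔ x ⟨i, h⟩ ≤ K' X (i + 1) := by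
      intro i
      induction i with
      | zero =>
          intro h
          rw [K', K', hx 0 h]
          refine sup_le ?_ le_sup_left
          exact le_sup_right.trans' (le_himp_iff.2 (le_of_eq (h0 ⟨0, h⟩ rfl)))
      | succ i ih =>
          intro h
          have hi : i < n := Nat.lt_of_succ_lt h
          rw [K', hx (i + 1) h]
          refine sup_le ?_ le_sup_left
          refine le_sup_right.trans' (le_himp_iff.2 ?_)
          exact (hstep ⟨i, hi⟩ ⟨i + 1, h⟩ rfl).trans (ih hi)
    have hl : n - 1 < n := Nat.sub_lt hn one_pos
    have := (hlast ⟨n - 1, hl⟩ rfl).symm.le.trans (claim (n - 1) hl)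
    rw [Nat.sub_add_cancel hn] at this
    rw [← hXeq, krullTerm_ofFn]
    exact top_le_iff.1 this |>.symm
  · intro H x
    set X : ℕ → L := fun i => if h : i < n then x ⟨i, h⟩ else ⊥ with hX
    have hXeq : (fun i : Fin n => X i) = x := by
      funext i; simp [hX, i.isLt]
    have hx : ∀ (i : ℕ) (h : i < n), X i = x ⟨i, h⟩ := by
      intro i h; simp [hX, h]
    have htop : K' X n = ⊤ := by
      rw [← krullTerm_ofFn, hXeq]; exact (H x).symm
    refine ⟨fun j => bseq X j, ?_, ?_, ?_⟩
    · intro j hj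
      have hxj : x j = X (j : ℕ) := by simp [hX]
      simp only [hxj, hj]
      rw [bseq]
      exact eq_bot_iff.2 himp_inf_le
    · intro i j hj
      have hxj : x j = X (j : ℕ) := by simp [hX]
      have hxi : x i = X (i : ℕ) := by simp [hX]
      simp only [hxj, hxi, hj]
      rw [bseq]
      exact himp_inf_le
    · intro j hj
      have hxj : x j = X (j : ℕ) := by simp [hX]
      simp only [hxj]
      rw [bseq_sup, hj, Nat.sub_add_cancel hn]
      exact htop
end

section
/- The relation on finite subsets of a commutative ring R defined by U ⊢ J iff the multiplicative monoid generated by U meets the ideal generated by J satisfies the cut rule: if the monoid generated by U ∪ {a} meets ⟨J⟩ and the monoid generated by U meets ⟨J ∪ {a}⟩, then the monoid generated by U meets ⟨J⟩. -/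
lemma closure_insert_pow {R : Type*} [CommMonoid R] (a : R) (s : Set R) :
    ∀ x ∈ Submonoid.closure (insert a s), ∃ n : ℕ, ∃ u ∈ Submonoid.closure s,
      x = a ^ n * u := by
  intro x hx
  induction hx using Submonoid.closure_induction with
  | mem y hy =>
      rcases hy with rfl | hy
      · exact ⟨1, 1, one_mem _, by simp⟩
      · exact ⟨0, y, Submonoid.subset_closure hy, by simp⟩
  | one => exact ⟨0, 1, one_mem _, by simp⟩
  | mul y z _ _ hy hz =>
      obtain ⟨n, u, hu, rfl⟩ := hy
      obtain ⟨m, v, hv, rfl⟩ := hz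
      exact ⟨n + m, u * v, mul_mem hu hv, by rw [pow_add]; exact mul_mul_mul_comm _ _ _ _⟩

theorem zariski_entailment_cut {R : Type*} [CommRing R] [DecidableEq R]
    (U J : Finset R) (a : R)
    (h1 : ∃ m ∈ Submonoid.closure ((insert a U : Finset R) : Set R),
      m ∈ Ideal.span (J : Set R))
    (h2 : ∃ m ∈ Submonoid.closure (U : Set R),
      m ∈ Ideal.span ((insert a J : Finset R) : Set R)) :
    ∃ m ∈ Submonoid.closure (U : Set R), m ∈ Ideal.span (J : Set R) := by
  obtain ⟨m1, hm1c, hm1⟩ := h1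
  obtain ⟨m2, hm2c, hm2⟩ := h2
  rw [Finset.coe_insert] at hm1c hm2
  obtain ⟨n, u, hu, rfl⟩ := closure_insert_pow a _ m1 hm1c
  rw [Ideal.span_insert] at hm2
  obtain ⟨x, hx, j, hj, rfl⟩ := Submodule.mem_sup.mp hm2
  obtain ⟨r, rfl⟩ := Ideal.mem_span_singleton'.mp hx
  refine ⟨(r * a + j) ^ n * u, mul_mem (pow_mem hm2c n) hu, ?_⟩
  set I := Ideal.span (J : Set R)
  have hq : Ideal.Quotient.mk I ((r * a + j) ^ n * u) = 0 := by
    have hj0 : Ideal.Quotient.mk I j = 0 := Ideal.Quotient.eq_zero_iff_mem.mpr hj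
    have hm10 : Ideal.Quotient.mk I (a ^ n * u) = 0 :=
      Ideal.Quotient.eq_zero_iff_mem.mpr hm1
    have : Ideal.Quotient.mk I ((r * a + j) ^ n * u)
        = (Ideal.Quotient.mk I r) ^ n * Ideal.Quotient.mk I (a ^ n * u) := by
      simp [map_mul, map_add, map_pow, hj0, mul_pow, mul_comm, mul_assoc]
    rw [this, hm10, mul_zero]
  exact Ideal.Quotient.eq_zero_iff_mem.mp hq
end

section
/- For a commutative ring R, radical ideals of R are in order-preserving bijection with ideals of the Zariski lattice Zar(R), via I ↦ {J ∈ Zar(R) | J ⊆ I} and inversely 𝓘 ↦ {x ∈ R | √⟨x⟩ ∈ 𝓘}; under this bijection prime ideals of R correspond to prime ideals of Zar(R). -/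
/-- The Zariski lattice of `R`, as the set of radicals of finitely generated ideals. -/
def ZarSet (R : Type*) [CommRing R] : Set (Ideal R) :=
  {I | ∃ J : Finset R, I = (Ideal.span (J : Set R)).radical}

/-- An ideal of the Zariski lattice (ordered by inclusion, with join `√(I + J)`
and bottom `√0`). -/
def IsZarIdeal {R : Type*} [CommRing R] (𝓘 : Set (Ideal R)) : Prop :=
  𝓘 ⊆ ZarSet R ∧ (⊥ : Ideal R).radical ∈ 𝓘 ∧
  (∀ I J : Ideal R, I ∈ 𝓘 → J ∈ 𝓘 → (I ⊔ J).radical ∈ 𝓘) ∧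
  (∀ I J : Ideal R, I ∈ ZarSet R → J ∈ 𝓘 → I ≤ J → I ∈ 𝓘)

/-- A prime ideal of the Zariski lattice: a proper ideal such that
`√(I·J) ∈ 𝓘` implies `I ∈ 𝓘` or `J ∈ 𝓘` (the meet of `√I` and `√J` is `√(I·J)`). -/
def IsZarPrimeIdeal {R : Type*} [CommRing R] (𝓘 : Set (Ideal R)) : Prop :=
  IsZarIdeal 𝓘 ∧ 𝓘 ≠ ZarSet R ∧
  ∀ I J : Ideal R, I ∈ ZarSet R → J ∈ ZarSet R → (I * J).radical ∈ 𝓘 →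
    I ∈ 𝓘 ∨ J ∈ 𝓘

/-- The Zariski-lattice ideal associated to a radical ideal `I` of `R`. -/
def zarDown {R : Type*} [CommRing R] (I : Ideal R) : Set (Ideal R) :=
  {J | J ∈ ZarSet R ∧ J ≤ I}

/-- The set of elements of `R` associated to an ideal `𝓘` of the Zariski lattice. -/
def zarUp {R : Type*} [CommRing R] (𝓘 : Set (Ideal R)) : Set R :=
  {x | (Ideal.span {x}).radical ∈ 𝓘}

section Aux

variable {R : Type*} [CommRing R]

lemma zar_mem_radical {I : Ideal R} (h : I ∈ ZarSet R) : I.radical = I := by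
  obtain ⟨J, rfl⟩ := h
  exact Ideal.radical_idem _

lemma zar_singleton (x : R) : (Ideal.span {x}).radical ∈ ZarSet R :=
  ⟨{x}, by simp⟩

lemma zar_sup {I J : Ideal R} (hI : I ∈ ZarSet R) (hJ : J ∈ ZarSet R) :
    (I ⊔ J).radical ∈ ZarSet R := by
  obtain ⟨S, rfl⟩ := hI
  obtain ⟨T, rfl⟩ := hJ
  classical
  refine ⟨S ∪ T, ?_⟩
  rw [← Ideal.radical_sup, Finset.coe_union, Ideal.span_union]

lemma radical_le_of_isRadical {I J : Ideal R} (hJ : J.IsRadical) (h : I ≤ J) :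
    I.radical ≤ J := by
  have := Ideal.radical_mono h
  rwa [hJ.radical] at this

/-- zarUp of a Zar-ideal, as an ideal. -/
lemma zarUp_ideal (𝓘 : Set (Ideal R)) (h : IsZarIdeal 𝓘) :
    ∃ I : Ideal R, I.IsRadical ∧ (I : Set R) = zarUp 𝓘 := by
  obtain ⟨hsub, hbot, hjoin, hdown⟩ := h
  have hzero : (0 : R) ∈ zarUp 𝓘 := by
    show (Ideal.span {(0 : R)}).radical ∈ 𝓘
    rw [Ideal.span_singleton_eq_bot.2 rfl]
    exact hbot
  have hadd : ∀ x y : R, x ∈ zarUp 𝓘 → y ∈ zarUp 𝓘 → x + y ∈ zarUp 𝓘 := by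
    intro x y hx hy
    have hxy := hjoin _ _ hx hy
    rw [← Ideal.radical_sup] at hxy
    refine hdown _ _ (zar_singleton _) hxy ?_
    apply Ideal.radical_mono
    rw [Ideal.span_singleton_le_iff_mem]
    exact Ideal.add_mem _ (Ideal.mem_sup_left (Ideal.subset_span rfl))
      (Ideal.mem_sup_right (Ideal.subset_span rfl))
  have hsmul : ∀ (r x : R), x ∈ zarUp 𝓘 → r * x ∈ zarUp 𝓘 := by
    intro r x hx
    refine hdown _ _ (zar_singleton _) hx ?_
    apply Ideal.radical_mono
    rw [Ideal.span_singleton_le_iff_mem]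
    exact Ideal.mem_span_singleton.2 ⟨r, mul_comm r x⟩
  refine ⟨{ carrier := zarUp 𝓘, zero_mem' := hzero,
            add_mem' := fun ha hb => hadd _ _ ha hb,
            smul_mem' := fun r x hx => hsmul r x hx }, ?_, rfl⟩
  intro x hx
  obtain ⟨n, hxn⟩ := hx
  show (Ideal.span {x}).radical ∈ 𝓘
  have hn : (Ideal.span {x ^ n}).radical ∈ 𝓘 := hxn
  rcases Nat.eq_zero_or_pos n with hn0 | hn0
  · subst hn0
    simp only [pow_zero] at hn
    refine hdown _ _ (zar_singleton _) hn ?_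
    apply Ideal.radical_mono
    simp [Ideal.span_singleton_le_iff_mem, Ideal.mem_span_singleton_self]
  · rwa [← Ideal.span_singleton_pow, Ideal.radical_pow _ hn0.ne'] at hn

lemma span_finset_radical_mem (𝓘 : Set (Ideal R)) (h : IsZarIdeal 𝓘)
    (S : Finset R) (hS : ∀ s ∈ S, (Ideal.span {s}).radical ∈ 𝓘) :
    (Ideal.span (S : Set R)).radical ∈ 𝓘 := by
  obtain ⟨hsub, hbot, hjoin, hdown⟩ := h
  classical
  induction S using Finset.induction_on with
  | empty => simpa using hbot
  | @insert a S ha ih =>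
    have h1 : (Ideal.span {a}).radical ∈ 𝓘 := hS a (Finset.mem_insert_self a S)
    have h2 : (Ideal.span (S : Set R)).radical ∈ 𝓘 :=
      ih fun s hs => hS s (Finset.mem_insert_of_mem hs)
    have := hjoin _ _ h1 h2
    rw [← Ideal.radical_sup] at this
    rw [Finset.coe_insert, Set.insert_eq, Ideal.span_union]
    exact this

end Aux

theorem radical_ideals_correspond_to_zariski_ideals {R : Type*} [CommRing R] :
    (∀ I : Ideal R, I.IsRadical → IsZarIdeal (zarDown I)) ∧
    (∀ 𝓘 : Set (Ideal R), IsZarIdeal 𝓘 →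
      ∃ I : Ideal R, I.IsRadical ∧ (I : Set R) = zarUp 𝓘) ∧
    (∀ I : Ideal R, I.IsRadical → zarUp (zarDown I) = (I : Set R)) ∧
    (∀ 𝓘 : Set (Ideal R), IsZarIdeal 𝓘 → ∀ I : Ideal R,
      (I : Set R) = zarUp 𝓘 → zarDown I = 𝓘) ∧
    (∀ I I' : Ideal R, I.IsRadical → I'.IsRadical →
      (I ≤ I' ↔ zarDown I ⊆ zarDown I')) ∧
    (∀ I : Ideal R, I.IsRadical → (I.IsPrime ↔ IsZarPrimeIdeal (zarDown I))) := by
  have hdown : ∀ I : Ideal R, I.IsRadical → IsZarIdeal (zarDown I) := by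
    intro I hI
    refine ⟨fun J hJ => hJ.1, ⟨⟨∅, by simp⟩, ?_⟩, ?_, ?_⟩
    · exact radical_le_of_isRadical hI bot_le
    · rintro J K ⟨hJz, hJle⟩ ⟨hKz, hKle⟩
      exact ⟨zar_sup hJz hKz, radical_le_of_isRadical hI (sup_le hJle hKle)⟩
    · rintro J K hJz ⟨_, hKle⟩ hle
      exact ⟨hJz, le_trans hle hKle⟩
  have hsing_mem : ∀ (I : Ideal R), I.IsRadical → ∀ x : R,
      x ∈ I ↔ (Ideal.span {x}).radical ≤ I := by
    intro I hI x
    constructor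
    · intro hx
      exact radical_le_of_isRadical hI ((Ideal.span_singleton_le_iff_mem _).2 hx)
    · intro h
      exact h (Ideal.le_radical (Ideal.subset_span rfl))
  refine ⟨hdown, zarUp_ideal, ?_, ?_, ?_, ?_⟩
  · intro I hI
    ext x
    simp only [zarUp, zarDown, Set.mem_setOf_eq, SetLike.mem_coe]
    constructor
    · rintro ⟨_, hle⟩
      exact (hsing_mem I hI x).2 hle
    · intro hx
      exact ⟨zar_singleton x, (hsing_mem I hI x).1 hx⟩
  · intro 𝓘 h𝓘 I hIeq
    obtain ⟨hsub, hbot, hjoin, hdn⟩ := h𝓘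
    have hmem : ∀ x : R, x ∈ I ↔ (Ideal.span {x}).radical ∈ 𝓘 := by
      intro x
      constructor
      · intro hx
        have : x ∈ (I : Set R) := hx
        rw [hIeq] at this; exact this
      · intro hx
        have : x ∈ zarUp 𝓘 := hx
        rw [← hIeq] at this; exact this
    ext J
    simp only [zarDown, Set.mem_setOf_eq]
    constructor
    · rintro ⟨hJz, hJle⟩
      obtain ⟨S, rfl⟩ := hJz
      refine span_finset_radical_mem 𝓘 ⟨hsub, hbot, hjoin, hdn⟩ S ?_
      intro s hs
      refine (hmem s).1 (hJle ?_)
      exact Ideal.le_radical (Ideal.subset_span hs)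
    · intro hJ
      have hJz := hsub hJ
      refine ⟨hJz, ?_⟩
      intro x hx
      rw [hmem]
      refine hdn _ _ (zar_singleton x) hJ ?_
      have : (Ideal.span {x}).radical ≤ J.radical :=
        Ideal.radical_mono ((Ideal.span_singleton_le_iff_mem _).2 hx)
      rwa [zar_mem_radical hJz] at this
  · intro I I' hI hI'
    constructor
    · rintro h J ⟨hJz, hJle⟩
      exact ⟨hJz, le_trans hJle h⟩
    · intro h x hx
      have := h ⟨zar_singleton x, (hsing_mem I hI x).1 hx⟩
      exact (hsing_mem I' hI' x).2 this.2
  · intro I hI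
    constructor
    · intro hP
      refine ⟨hdown I hI, ?_, ?_⟩
      · intro heq
        have : (⊤ : Ideal R) ∈ zarDown I := by
          rw [heq]
          exact ⟨{1}, by simp [Ideal.span_singleton_one, Ideal.radical_eq_top.2 rfl]⟩
        exact hP.1 (top_le_iff.1 this.2)
      · rintro J K hJz hKz ⟨_, hle⟩
        have hmul : J * K ≤ I := le_trans Ideal.le_radical hle
        rcases (Ideal.IsPrime.mul_le hP).1 hmul with h | h
        · exact Or.inl ⟨hJz, h⟩
        · exact Or.inr ⟨hKz, h⟩
    · rintro ⟨hid, hne, hprime⟩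
      constructor
      · intro htop
        apply hne
        ext J
        simp only [zarDown, Set.mem_setOf_eq]
        exact ⟨fun h => h.1, fun h => ⟨h, htop ▸ le_top⟩⟩
      · intro x y hxy
        have hmem : ((Ideal.span {x}).radical * (Ideal.span {y}).radical).radical
            ∈ zarDown I := by
          refine ⟨?_, ?_⟩
          · rw [Ideal.radical_mul, Ideal.radical_idem, Ideal.radical_idem,
              ← Ideal.radical_mul, Ideal.span_singleton_mul_span_singleton]
            exact zar_singleton (x * y)
          · rw [Ideal.radical_mul, Ideal.radical_idem, Ideal.radical_idem,
              ← Ideal.radical_mul, Ideal.span_singleton_mul_span_singleton]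
            exact (hsing_mem I hI (x * y)).1 hxy
        rcases hprime _ _ (zar_singleton x) (zar_singleton y) hmem with h | h
        · exact Or.inl ((hsing_mem I hI x).2 h.2)
        · exact Or.inr ((hsing_mem I hI y).2 h.2)
end

section
/- A commutative ring R has Krull dimension ≤ n−1 if and only if for every sequence x₁,…,xₙ ∈ R there exist a₁,…,aₙ ∈ R and m₁,…,mₙ ∈ ℕ such that x₁^{m₁}·( … ·(xₙ^{mₙ}·(1 + aₙxₙ) + … ) + a₁x₁) = 0. -/
/-- The nested expression `x₁^{m₁}(⋯(xₙ^{mₙ}(1 + aₙxₙ) + ⋯) + a₁x₁)` for the list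
`[(x₁,a₁,m₁), …, (xₙ,aₙ,mₙ)]`. -/
def nestedExpr {R : Type*} [CommRing R] : List (R × R × ℕ) → R
  | [] => 1
  | (x, a, m) :: t => x ^ m * (nestedExpr t + a * x)

namespace KrullAux

variable {R : Type*} [CommRing R]

/-- Nested expression with innermost seed `s`. -/
def nExpr (s : R) : List (R × R × ℕ) → R
  | [] => s
  | (x, a, m) :: t => x ^ m * (nExpr s t + a * x)

lemma nestedExpr_eq (l : List (R × R × ℕ)) : nestedExpr l = nExpr 1 l := by
  induction l with
  | nil => rfl
  | cons h t ih => obtain ⟨x, a, m⟩ := h; simp [nestedExpr, nExpr, ih]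

/-- The saturation `{r | ∃ k, xᵏ r ∈ I}`. -/
def sat (I : Ideal R) (x : R) : Ideal R where
  carrier := {r | ∃ k, x ^ k * r ∈ I}
  zero_mem' := ⟨0, by simp⟩
  add_mem' := by
    rintro a b ⟨k, hk⟩ ⟨l, hl⟩
    refine ⟨k + l, ?_⟩
    have h : x ^ (k + l) * (a + b) = x ^ l * (x ^ k * a) + x ^ k * (x ^ l * b) := by ring
    rw [h]
    exact add_mem (I.mul_mem_left _ hk) (I.mul_mem_left _ hl)
  smul_mem' := by
    rintro c r ⟨k, hk⟩
    refine ⟨k, ?_⟩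
    have h : x ^ k * (c • r) = c * (x ^ k * r) := by rw [smul_eq_mul]; ring
    rw [h]
    exact I.mul_mem_left _ hk

lemma mem_sat {I : Ideal R} {x r : R} : r ∈ sat I x ↔ ∃ k, x ^ k * r ∈ I := Iff.rfl

/-- Collapsing a chain of primes: if the nested expression with seed `s` lies in the bottom
prime of a chain adapted to the `x i`, then `s` lies in the top prime. -/
lemma memChain : ∀ (n : ℕ) (x a : Fin n → R) (m : Fin n → ℕ) (s : R)
    (Q : Fin (n + 1) → Ideal R), (∀ i, (Q i).IsPrime) → Monotone Q →
    (∀ i, x i ∈ Q i.succ) → (∀ i, x i ∉ Q i.castSucc) →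
    nExpr s (List.ofFn fun i => (x i, a i, m i)) ∈ Q 0 → s ∈ Q (Fin.last n)
  | 0, x, a, m, s, Q, hp, hm, hx1, hx2, h => by simpa [nExpr] using h
  | n + 1, x, a, m, s, Q, hp, hm, hx1, hx2, h => by
    rw [List.ofFn_succ] at h
    set e := nExpr s (List.ofFn fun i : Fin n => (x i.succ, a i.succ, m i.succ)) with he
    have h' : x 0 ^ m 0 * (e + a 0 * x 0) ∈ Q 0 := h
    have hx0 : x 0 ∉ Q 0 := by
      have := hx2 0
      simpa using this
    have h1 : e + a 0 * x 0 ∈ Q 0 := by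
      rcases (hp 0).mem_or_mem h' with h'' | h''
      · exact absurd ((hp 0).mem_of_pow_mem _ h'') hx0
      · exact h''
    have h01 : (0 : Fin (n + 2)) ≤ 1 := Fin.zero_le _
    have h2 : e ∈ Q 1 := by
      have hax : a 0 * x 0 ∈ Q 1 := by
        have := hx1 0
        exact (Q 1).mul_mem_left _ (by simpa using this)
      have := hm h01 h1
      simpa using sub_mem this hax
    have key := memChain n (fun i => x i.succ) (fun i => a i.succ) (fun i => m i.succ) s
      (fun i => Q i.succ) (fun i => hp i.succ)
      (fun i j hij => hm (Fin.succ_le_succ_iff.mpr hij))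
      (fun i => hx1 i.succ)
      (fun i => by
        have := hx2 i.succ
        rw [← Fin.succ_castSucc] at this
        exact this)
      (by simpa using h2)
    simpa [Fin.succ_last] using key

/-- Building a chain of primes from the failure of all collapses. -/
lemma exists_chain : ∀ (n : ℕ) (x : Fin n → R) (I : Ideal R) (S : Submonoid R),
    (∀ (a : Fin n → R) (m : Fin n → ℕ), ∀ s ∈ S,
      nExpr s (List.ofFn fun i => (x i, a i, m i)) ∉ I) →
    ∃ P : Fin (n + 1) → Ideal R, (∀ i, (P i).IsPrime) ∧ StrictMono P ∧
      I ≤ P 0 ∧ Disjoint ((P (Fin.last n) : Ideal R) : Set R) (S : Set R)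
  | 0, x, I, S, H => by
    have hdisj : Disjoint (I : Set R) (S : Set R) := by
      rw [Set.disjoint_right]
      intro s hs hsI
      exact H x (fun _ => 0) s hs (by simpa [nExpr] using hsI)
    obtain ⟨p, hp, hIp, hdis⟩ := Ideal.exists_le_prime_disjoint I S hdisj
    exact ⟨fun _ => p, fun _ => hp, fun i j h => absurd (Subsingleton.elim (α := Fin 1) i j) h.ne, hIp, hdis⟩
  | n + 1, x, I, S, H => by
    set x0 := x 0 with hx0def
    set J : Ideal R := sat I x0 with hJ
    set I' : Ideal R := J ⊔ Ideal.span {x0} with hI'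
    have key : ∀ (a : Fin n → R) (m : Fin n → ℕ), ∀ s ∈ S,
        nExpr s (List.ofFn fun i => (x i.succ, a i, m i)) ∉ I' := by
      intro a m s hs hmem
      set e := nExpr s (List.ofFn fun i => (x i.succ, a i, m i)) with he
      obtain ⟨j, hj, r', hr', heq⟩ := Submodule.mem_sup.mp hmem
      obtain ⟨r, rfl⟩ := Ideal.mem_span_singleton'.mp hr'
      have hj' : e + -r * x0 ∈ J := by
        have he2 : e + -r * x0 = j := by rw [← heq]; ring
        rw [he2]; exact hj
      obtain ⟨k, hk⟩ := mem_sat.mp hj'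
      refine H (Fin.cons (-r) a) (Fin.cons k m) s hs ?_
      rw [List.ofFn_succ]
      simp only [Fin.cons_zero, Fin.cons_succ, Fin.cases_zero, Fin.cases_succ]
      show x 0 ^ k * (nExpr s (List.ofFn fun i : Fin n => (x i.succ, a i, m i)) + -r * x 0) ∈ I
      exact hk
    obtain ⟨P', hP'p, hP'mono, hIP', hdisj⟩ := exists_chain n (fun i => x i.succ) I' S key
    have hx0P : x0 ∈ P' 0 := hIP' (Submodule.mem_sup_right (Ideal.mem_span_singleton_self x0))
    have h1P : (1 : R) ∉ P' 0 := (P' 0).ne_top_iff_one.mp (hP'p 0).ne_top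
    set V : Submonoid R :=
      { carrier := {y | ∃ k : ℕ, ∃ s, s ∉ P' 0 ∧ y = x0 ^ k * s}
        one_mem' := ⟨0, 1, h1P, by simp⟩
        mul_mem' := by
          rintro y z ⟨k, s, hs, rfl⟩ ⟨l, t, ht, rfl⟩
          refine ⟨k + l, s * t, fun h => ?_, by ring⟩
          rcases (hP'p 0).mem_or_mem h with h | h
          exacts [hs h, ht h] } with hV
    have hdisjV : Disjoint (I : Set R) (V : Set R) := by
      rw [Set.disjoint_right]
      rintro y ⟨k, s, hs, rfl⟩ hyI
      exact hs (hIP' (Submodule.mem_sup_left (show s ∈ J from ⟨k, hyI⟩)))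
    obtain ⟨P0, hP0p, hIP0, hP0V⟩ := Ideal.exists_le_prime_disjoint I V hdisjV
    have hle : P0 ≤ P' 0 := by
      intro y hy
      by_contra hyP
      exact Set.disjoint_left.mp hP0V hy ⟨0, y, hyP, by simp⟩
    have hx0n : x0 ∉ P0 := fun h => Set.disjoint_left.mp hP0V h ⟨1, 1, h1P, by simp⟩
    have hP0lt : P0 < P' 0 := lt_of_le_of_ne hle (fun h => hx0n (h ▸ hx0P))
    refine ⟨Fin.cons P0 P', ?_, ?_, hIP0, ?_⟩
    · intro i
      refine Fin.cases ?_ ?_ i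
      · simpa using hP0p
      · intro j; simpa using hP'p j
    · rw [Fin.strictMono_iff_lt_succ]
      intro i
      refine Fin.cases ?_ ?_ i
      · simpa using hP0lt
      · intro j
        rw [← Fin.succ_castSucc, Fin.cons_succ, Fin.cons_succ]
        exact Fin.strictMono_iff_lt_succ.mp hP'mono j
    · rw [show Fin.last (n + 1) = (Fin.last n).succ from (Fin.succ_last n).symm, Fin.cons_succ]
      exact hdisj

end KrullAux

theorem ring_krullDim_le_iff {R : Type*} [CommRing R] (n : ℕ) :
    (¬ ∃ P : Fin (n + 1) → Ideal R, (∀ i, (P i).IsPrime) ∧ StrictMono P) ↔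
    (∀ x : Fin n → R, ∃ a : Fin n → R, ∃ m : Fin n → ℕ,
      nestedExpr (List.ofFn (fun i => (x i, a i, m i))) = 0) := by
  constructor
  · intro h x
    by_contra hx
    push_neg at hx
    obtain ⟨P, hp, hmono, -, -⟩ := KrullAux.exists_chain n x ⊥ ⊥ (by
      intro a m s hs hmem
      rw [Submonoid.mem_bot] at hs
      subst hs
      rw [Ideal.mem_bot] at hmem
      exact hx a m (by rw [KrullAux.nestedExpr_eq]; exact hmem))
    exact h ⟨P, hp, hmono⟩
  · rintro H ⟨P, hp, hmono⟩
    have hlt : ∀ i : Fin n, P i.castSucc < P i.succ := fun i => hmono (Fin.castSucc_lt_succ (i := i))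
    choose x hx1 hx2 using fun i => SetLike.exists_of_lt (hlt i)
    obtain ⟨a, m, h0⟩ := H x
    rw [KrullAux.nestedExpr_eq] at h0
    have h1 := KrullAux.memChain n x a m 1 P hp hmono.monotone hx1 hx2
      (by rw [h0]; exact (P 0).zero_mem)
    exact (P (Fin.last n)).ne_top_iff_one.mp (hp _).ne_top h1
end

section
/- Let K be a field, R a commutative K-algebra, and x₁,…,xₙ ∈ R algebraically dependent over K. Then the sequence x₁,…,xₙ is singular: there exist a₁,…,aₙ ∈ R and m₁,…,mₙ ∈ ℕ with x₁^{m₁}·( … ·(xₙ^{mₙ}·(1 + aₙxₙ) + … ) + a₁x₁) = 0. -/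
lemma nested_ofFn {R : Type*} [CommRing R] (n : ℕ) (x a : Fin n → R) (m : Fin n → ℕ) :
    nestedExpr (List.ofFn (fun i => (x i, a i, m i))) =
      (∏ j, x j ^ m j) + ∑ i, (∏ j, x j ^ (if j ≤ i then m j else 0)) * (a i * x i) := by
  induction n with
  | zero => simp [nestedExpr]
  | succ n ih =>
    rw [List.ofFn_succ]
    show x 0 ^ m 0 * (nestedExpr _ + a 0 * x 0) = _
    rw [ih (fun i => x i.succ) (fun i => a i.succ) (fun i => m i.succ)]
    rw [Fin.prod_univ_succ, Fin.sum_univ_succ]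
    have h0 : (∏ j, x j ^ (if j ≤ (0 : Fin (n+1)) then m j else 0)) = x 0 ^ m 0 := by
      rw [Fin.prod_univ_succ]
      simp [Fin.le_zero_iff, Fin.succ_ne_zero]
    have hs : ∀ i : Fin n, (∏ j : Fin (n+1), x j ^ (if j ≤ i.succ then m j else 0))
        = x 0 ^ m 0 * ∏ j : Fin n, x j.succ ^ (if j ≤ i then m j.succ else 0) := by
      intro i
      rw [Fin.prod_univ_succ]
      simp [Fin.succ_le_succ_iff, Fin.zero_le]
    rw [h0]
    simp only [hs]
    rw [mul_add, mul_add, Finset.mul_sum]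
    simp only [← mul_assoc]
    ring

theorem algebraically_dependent_is_singular {K R : Type*} [Field K] [CommRing R]
    [Algebra K R] (n : ℕ) (x : Fin n → R)
    (hdep : ∃ Q : MvPolynomial (Fin n) K, Q ≠ 0 ∧ MvPolynomial.aeval x Q = 0) :
    ∃ a : Fin n → R, ∃ m : Fin n → ℕ,
      nestedExpr (List.ofFn (fun i => (x i, a i, m i))) = 0 := by
  classical
  obtain ⟨Q, hQ0, hQx⟩ := hdep
  obtain ⟨α, hαmem, hαmin⟩ := Finset.exists_min_image Q.support (fun β => toLex β)
    (MvPolynomial.support_nonempty.mpr hQ0)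
  set c : K := Q.coeff α with hc
  have hcne : c ≠ 0 := MvPolynomial.mem_support_iff.mp hαmem
  set Q' : MvPolynomial (Fin n) K := c⁻¹ • Q with hQ'
  have hQ'x : MvPolynomial.aeval x Q' = 0 := by
    rw [hQ', map_smul, hQx, smul_zero]
  have hQ'supp : Q'.support = Q.support :=
    MvPolynomial.support_smul_eq (inv_ne_zero hcne) Q
  have hQ'α : Q'.coeff α = 1 := by
    rw [hQ', MvPolynomial.coeff_smul, smul_eq_mul, ← hc, inv_mul_cancel₀ hcne]
  -- the classes
  set S : Fin n → Finset (Fin n →₀ ℕ) := fun i =>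
    Q.support.filter (fun β => (∀ j, j < i → β j = α j) ∧ α i < β i) with hS
  set g : Fin n → (Fin n →₀ ℕ) → Fin n → ℕ := fun i β j =>
    if j < i then 0 else if j = i then β i - (α i + 1) else β j with hg
  refine ⟨fun i => ∑ β ∈ S i, algebraMap K R (Q'.coeff β) * ∏ j, x j ^ (g i β j),
    fun i => α i, ?_⟩
  rw [nested_ofFn]
  -- partition of the support
  have hdisj : ((Finset.univ : Finset (Fin n)) : Set (Fin n)).PairwiseDisjoint S := by
    intro i _ i' _ hne
    simp only [Function.onFun]
    rw [Finset.disjoint_left]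
    intro β h1 h2
    simp only [hS, Finset.mem_filter] at h1 h2
    rcases lt_trichotomy i i' with h | h | h
    · exact absurd (h2.2.1 i h) (ne_of_gt h1.2.2)
    · exact hne h
    · exact absurd (h1.2.1 i' h) (ne_of_gt h2.2.2)
  have hunion : (Finset.univ : Finset (Fin n)).biUnion S = Q.support.erase α := by
    ext β
    simp only [Finset.mem_biUnion, Finset.mem_univ, true_and, Finset.mem_erase, hS,
      Finset.mem_filter]
    constructor
    · rintro ⟨i, hmem, hji, hlt⟩
      refine ⟨fun h => ?_, hmem⟩
      rw [h] at hlt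
      exact lt_irrefl _ hlt
    · rintro ⟨hne, hmem⟩
      have hlt : toLex α < toLex β := by
        rcases lt_or_eq_of_le (hαmin β hmem) with h | h
        · exact h
        · exact absurd (toLex.injective h) (Ne.symm hne)
      obtain ⟨i, hji, hlt'⟩ := Finsupp.Lex.lt_iff.mp hlt
      exact ⟨i, hmem, fun j hj => (hji j hj).symm, hlt'⟩
  -- product factorization on each class
  have hβprod : ∀ i : Fin n, ∀ β ∈ S i,
      (∏ j, x j ^ (β j : ℕ)) =
        (∏ j, x j ^ (if j ≤ i then α j else 0)) * ((∏ j, x j ^ (g i β j)) * x i) := by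
    intro i β hβ
    simp only [hS, Finset.mem_filter] at hβ
    obtain ⟨-, hji, hlt⟩ := hβ
    have hx : (∏ j, (if j = i then x j else 1)) = x i := by
      simp
    rw [← hx, ← Finset.prod_mul_distrib, ← Finset.prod_mul_distrib]
    apply Finset.prod_congr rfl
    intro j _
    rcases lt_trichotomy j i with h | h | h
    · simp [hg, h, le_of_lt h, hji j h, if_neg (ne_of_lt h)]
    · subst h
      have h1 : (if j ≤ j then α j else 0) = α j := if_pos le_rfl
      have h2 : (if j = j then x j else 1) = x j := if_pos rfl
      have h3 : g j β j = β j - (α j + 1) := by simp [hg]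
      rw [h1, h2, h3, ← pow_succ, ← pow_add]
      congr 1
      omega
    · simp [hg, if_neg (not_lt_of_gt h), if_neg (ne_of_gt h), if_neg (not_le_of_gt h)]
  -- assemble
  have hsum_i : ∀ i : Fin n,
      (∏ j, x j ^ (if j ≤ i then α j else 0)) *
        ((∑ β ∈ S i, algebraMap K R (Q'.coeff β) * ∏ j, x j ^ (g i β j)) * x i)
      = ∑ β ∈ S i, algebraMap K R (Q'.coeff β) * ∏ j, x j ^ (β j : ℕ) := by
    intro i
    rw [Finset.sum_mul, Finset.mul_sum]
    refine Finset.sum_congr rfl fun β hβ => ?_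
    rw [hβprod i β hβ]
    ring
  simp only [hsum_i]
  rw [← Finset.sum_biUnion hdisj, hunion]
  have h1 : (∏ j, x j ^ (α j : ℕ)) = algebraMap K R (Q'.coeff α) * ∏ j, x j ^ (α j : ℕ) := by
    rw [hQ'α, map_one, one_mul]
  have h2 := Finset.add_sum_erase Q.support
    (fun β => algebraMap K R (Q'.coeff β) * ∏ j, x j ^ (β j : ℕ)) hαmem
  rw [h1, h2, ← hQ'supp, ← MvPolynomial.eval₂_eq', ← MvPolynomial.aeval_def]
  exact hQ'x
end

section
/- Let K be a field. The Krull dimension of the polynomial ring K[X₁,…,Xₙ] is exactly n, i.e., every sequence of n+1 elements is singular (in Lombardi's sense) but the sequence X₁,…,Xₙ is not singular. -/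
open MvPolynomial

lemma nestedExpr_map {R S : Type*} [CommRing R] [CommRing S] (f : R →+* S) :
    ∀ L : List (R × R × ℕ),
      nestedExpr (L.map fun p => (f p.1, f p.2.1, p.2.2)) = f (nestedExpr L)
  | [] => by simp [nestedExpr]
  | (x, a, m) :: t => by
      simp [nestedExpr, nestedExpr_map f t, map_mul, map_add, map_pow]

lemma nestedExpr_X_ne_zero {K : Type*} [Field K] {n : ℕ} :
    ∀ L : List (Fin n × MvPolynomial (Fin n) K × ℕ), (L.map Prod.fst).Nodup →
      nestedExpr (L.map fun p => (X p.1, p.2.1, p.2.2)) ≠ 0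
  | [], _ => by simp [nestedExpr]
  | (i, a, m) :: t, hnd => by
      simp only [List.map_cons, nestedExpr]
      simp only [List.map_cons, List.nodup_cons] at hnd
      obtain ⟨hi, hnd⟩ := hnd
      have hX : (X i : MvPolynomial (Fin n) K) ^ m ≠ 0 := pow_ne_zero _ (X_ne_zero i)
      refine mul_ne_zero hX fun h => ?_
      set φ : MvPolynomial (Fin n) K →ₐ[K] MvPolynomial (Fin n) K :=
        aeval (fun j => if j = i then 0 else X j) with hφ
      have hφi : φ (X i) = 0 := by simp [hφ]
      have hthis := congrArg φ h
      rw [map_add, map_mul, hφi, mul_zero, add_zero, map_zero] at hthis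
      have h3 := nestedExpr_map φ.toRingHom (t.map fun p => (X p.1, p.2.1, p.2.2))
      rw [show (⇑φ.toRingHom) = ⇑φ from rfl, hthis, List.map_map] at h3
      have hrw : t.map ((fun p : MvPolynomial (Fin n) K × MvPolynomial (Fin n) K × ℕ =>
            (φ p.1, φ p.2.1, p.2.2)) ∘ (fun p : Fin n × MvPolynomial (Fin n) K × ℕ =>
            (X p.1, p.2.1, p.2.2)))
          = (t.map fun p : Fin n × MvPolynomial (Fin n) K × ℕ => (p.1, φ p.2.1, p.2.2)).map
              fun p => (X p.1, p.2.1, p.2.2) := by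
        rw [List.map_map]
        refine List.map_congr_left fun p hp => ?_
        have hpne : p.1 ≠ i := fun he => hi (he ▸ List.mem_map_of_mem (f := Prod.fst) hp)
        simp [Function.comp, hφ, hpne]
      rw [hrw] at h3
      have hnd2 : ((t.map fun p : Fin n × MvPolynomial (Fin n) K × ℕ =>
          (p.1, φ p.2.1, p.2.2)).map Prod.fst).Nodup := by
        rw [List.map_map]
        exact hnd
      exact nestedExpr_X_ne_zero _ hnd2 h3
termination_by L => L.length
decreasing_by simp [List.length_map]

lemma exists_X_pow_mul {R : Type*} [CommRing R] (p : Polynomial R) (hp : p ≠ 0) :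
    ∃ m q, p = Polynomial.X ^ m * q ∧ q.coeff 0 ≠ 0 := by
  by_cases h0 : p.coeff 0 ≠ 0
  · exact ⟨0, p, by simp, h0⟩
  push_neg at h0
  have hd : p.divX ≠ 0 := by
    rw [Ne, Polynomial.divX_eq_zero_iff, h0, map_zero]; exact hp
  have hlt : p.divX.natDegree < p.natDegree := by
    rw [Polynomial.natDegree_divX_eq_natDegree_tsub_one]
    have : p.natDegree ≠ 0 := by
      intro h
      exact hp (by rw [Polynomial.eq_C_of_natDegree_eq_zero h, h0, map_zero])
    omega
  obtain ⟨m, q, hq, hq0⟩ := exists_X_pow_mul p.divX hd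
  exact ⟨m + 1, q, by
    conv_lhs => rw [← Polynomial.X_mul_divX_add p]
    rw [h0, map_zero, add_zero, hq]; ring, hq0⟩
termination_by p.natDegree

lemma aeval_via_finSuccEquiv {K : Type*} [CommSemiring K] {ℓ : ℕ} {R : Type*} [CommSemiring R]
    [Algebra K R] (x : Fin (ℓ + 1) → R) (Q : MvPolynomial (Fin (ℓ + 1)) K) :
    aeval x Q = Polynomial.eval₂ ((aeval (x ∘ Fin.succ) :
      MvPolynomial (Fin ℓ) K →ₐ[K] R) : MvPolynomial (Fin ℓ) K →+* R)
      (x 0) (finSuccEquiv K ℓ Q) := by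
  induction Q using MvPolynomial.induction_on with
  | C a => simp [finSuccEquiv_apply]
  | add p q hp hq => simp [map_add, Polynomial.eval₂_add, hp, hq]
  | mul_X p i hp =>
      rw [map_mul, map_mul, Polynomial.eval₂_mul, hp]
      congr 1
      refine Fin.cases ?_ (fun j => ?_) i
      · rw [finSuccEquiv_X_zero, Polynomial.eval₂_X, aeval_X]
      · rw [finSuccEquiv_X_succ, Polynomial.eval₂_C, aeval_X]
        simp

lemma key_decomp {K : Type*} [Field K] : ∀ (ℓ : ℕ) (Q : MvPolynomial (Fin ℓ) K), Q ≠ 0 →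
    ∀ {R : Type*} [CommRing R] [Algebra K R] (x : Fin ℓ → R),
    ∃ (a : Fin ℓ → R) (m : Fin ℓ → ℕ) (c : K), c ≠ 0 ∧
      aeval x Q = algebraMap K R c * nestedExpr (List.ofFn fun i => (x i, a i, m i)) := by
  intro ℓ
  induction ℓ with
  | zero =>
      intro Q hQ R _ _ x
      refine ⟨![], ![], Q.coeff 0, ?_, ?_⟩
      · intro h; apply hQ
        rw [eq_C_of_isEmpty Q, h, map_zero]
      · rw [List.ofFn_zero]
        show _ = _ * nestedExpr []
        rw [eq_C_of_isEmpty Q, aeval_C, nestedExpr, mul_one]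
        simp
  | succ ℓ IH =>
      intro Q hQ R _ _ x
      set P := finSuccEquiv K ℓ Q with hP
      have hPne : P ≠ 0 := by
        simp [hP, hQ]
      obtain ⟨m₀, P', hfac, h0⟩ := exists_X_pow_mul P hPne
      obtain ⟨a', m', c, hc, hIH⟩ := IH (P'.coeff 0) h0 (x ∘ Fin.succ)
      set f : MvPolynomial (Fin ℓ) K →+* R :=
        ((aeval (x ∘ Fin.succ) : MvPolynomial (Fin ℓ) K →ₐ[K] R) :
          MvPolynomial (Fin ℓ) K →+* R) with hf
      set w : R := Polynomial.eval₂ f (x 0) P'.divX with hw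
      refine ⟨Fin.cons (algebraMap K R c⁻¹ * w) a', Fin.cons m₀ m', c, hc, ?_⟩
      rw [aeval_via_finSuccEquiv, ← hP, hfac, Polynomial.eval₂_mul, Polynomial.eval₂_X_pow]
      conv_lhs => rw [← Polynomial.X_mul_divX_add P']
      rw [Polynomial.eval₂_add, Polynomial.eval₂_mul, Polynomial.eval₂_X, Polynomial.eval₂_C]
      have hfc : f (P'.coeff 0) = algebraMap K R c *
          nestedExpr (List.ofFn fun i => ((x ∘ Fin.succ) i, a' i, m' i)) := hIH
      simp only [Function.comp] at hfc
      rw [List.ofFn_succ]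
      simp only [Fin.cons_zero, Fin.cons_succ]
      rw [nestedExpr]
      rw [hfc, ← hw]
      have hcc : algebraMap K R c * algebraMap K R c⁻¹ = 1 := by
        rw [← map_mul, mul_inv_cancel₀ hc, map_one]
      linear_combination (-(x 0 ^ m₀ * x 0 * w)) * hcc

lemma exists_annihilator {K : Type*} [Field K] (n : ℕ)
    (x : Fin (n + 1) → MvPolynomial (Fin n) K) :
    ∃ Q : MvPolynomial (Fin (n + 1)) K, Q ≠ 0 ∧ aeval x Q = 0 := by
  classical
  by_contra hcon
  push_neg at hcon
  have hinj : Function.Injective (aeval x : MvPolynomial (Fin (n + 1)) K →ₐ[K] _) := by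
    refine (injective_iff_map_eq_zero _).mpr fun Q hQ => ?_
    by_contra hQ0
    exact hcon Q hQ0 hQ
  set d : ℕ := Finset.univ.sup fun i => (x i).totalDegree with hd
  set c : ℕ := (n + 1) * d + 1 with hc
  set D : ℕ := c ^ n + 1 with hD
  set N : ℕ := (n + 1) * D * d with hN
  -- the monomial family
  set α : (Fin (n + 1) → Fin D) → (Fin (n + 1) →₀ ℕ) :=
    fun f => Finsupp.equivFunOnFinite.symm fun i => (f i : ℕ) with hα
  have hαinj : Function.Injective α := by
    intro f g hfg
    have := Finsupp.equivFunOnFinite.symm.injective hfg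
    funext i
    exact Fin.val_injective (congrFun this i)
  set μ : (Fin (n + 1) → Fin D) → MvPolynomial (Fin (n + 1)) K :=
    fun f => monomial (α f) 1 with hμ
  have hli : LinearIndependent K μ := by
    have := (basisMonomials (Fin (n + 1)) K).linearIndependent.comp α hαinj
    rwa [coe_basisMonomials] at this
  have hv : LinearIndependent K fun f => aeval x (μ f) := by
    have := hli.map' (aeval x).toLinearMap (LinearMap.ker_eq_bot.mpr hinj)
    exact this
  -- compute the image
  have himg : ∀ f, aeval x (μ f) = ∏ i, x i ^ (f i : ℕ) := by
    intro f
    rw [hμ, aeval_monomial, map_one, one_mul]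
    rw [Finsupp.prod_fintype]
    · rfl
    · intro i; exact pow_zero _
  have hdeg : ∀ f : Fin (n + 1) → Fin D, (aeval x (μ f)).totalDegree ≤ N := by
    intro f
    rw [himg]
    calc (∏ i, x i ^ (f i : ℕ)).totalDegree
        ≤ ∑ i, (x i ^ (f i : ℕ)).totalDegree := totalDegree_finset_prod _ _
      _ ≤ ∑ i : Fin (n + 1), D * d := by
          refine Finset.sum_le_sum fun i _ => ?_
          calc (x i ^ (f i : ℕ)).totalDegree ≤ (f i : ℕ) * (x i).totalDegree :=
                totalDegree_pow _ _
            _ ≤ D * d := by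
                have h1 : (f i : ℕ) ≤ D := le_of_lt (f i).isLt
                have h2 : (x i).totalDegree ≤ d := by
                  rw [hd]
                  exact Finset.le_sup (f := fun i => (x i).totalDegree) (Finset.mem_univ i)
                exact Nat.mul_le_mul h1 h2
      _ = N := by simp [hN]; ring
  set w : Finset (MvPolynomial (Fin n) K) :=
    Finset.image (fun g : Fin n → Fin (N + 1) =>
      (monomial (Finsupp.equivFunOnFinite.symm fun i => (g i : ℕ)) (1 : K)))
      Finset.univ with hwdef
  have hspan : ∀ f, aeval x (μ f) ∈ Submodule.span K (w : Set (MvPolynomial (Fin n) K)) := by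
    intro f
    set p := aeval x (μ f) with hp
    have hpd : p.totalDegree ≤ N := hdeg f
    rw [p.as_sum]
    refine Submodule.sum_mem _ fun β hβ => ?_
    have hmono : monomial β (coeff β p) = (coeff β p) • monomial β (1 : K) := by
      rw [smul_monomial, smul_eq_mul, mul_one]
    rw [hmono]
    refine Submodule.smul_mem _ _ (Submodule.subset_span ?_)
    have hβN : ∀ i, β i ≤ N := by
      intro i
      have h1 : β.sum (fun _ e => e) ≤ p.totalDegree := le_totalDegree hβ
      have h2 : β i ≤ β.sum (fun _ e => e) := by
        by_cases h : β i = 0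
        · omega
        · have : i ∈ β.support := Finsupp.mem_support_iff.mpr h
          exact Finset.single_le_sum (fun _ _ => Nat.zero_le _) this
      omega
    rw [hwdef]
    simp only [Finset.coe_image, Set.mem_image, Finset.mem_coe, Finset.mem_univ]
    refine ⟨fun i => ⟨β i, Nat.lt_succ_of_le (hβN i)⟩, trivial, ?_⟩
    have hβeq : (Finsupp.equivFunOnFinite.symm
        fun i => ((⟨β i, Nat.lt_succ_of_le (hβN i)⟩ : Fin (N + 1)) : ℕ)) = β := by
      rw [show (fun i => ((⟨β i, Nat.lt_succ_of_le (hβN i)⟩ : Fin (N + 1)) : ℕ)) = ⇑β from rfl,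
        Finsupp.equivFunOnFinite_symm_coe]
    rw [hβeq]
  have hspan' : Set.range (fun f => aeval x (μ f)) ≤
      ↑(Submodule.span K (w : Set (MvPolynomial (Fin n) K))) :=
    Set.range_subset_iff.mpr hspan
  have hcard := linearIndependent_le_span_aux' _ hv (↑w) hspan'
  simp only [Fintype.card_fun, Fintype.card_fin] at hcard
  have hwc : Fintype.card ↑(↑w : Set (MvPolynomial (Fin n) K)) = w.card := by
    simp
  rw [hwc] at hcard
  have hwcard : w.card ≤ (N + 1) ^ n := by
    calc w.card ≤ Fintype.card (Fin n → Fin (N + 1)) := Finset.card_image_le.trans (by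
          rw [Finset.card_univ])
      _ = (N + 1) ^ n := by rw [Fintype.card_fun, Fintype.card_fin, Fintype.card_fin]
  have harith : (N + 1) ^ n < D ^ (n + 1) := by
    have h1 : N + 1 ≤ c * D := by
      have : (1 : ℕ) ≤ D := by rw [hD]; exact Nat.le_add_left 1 _
      calc N + 1 = (n + 1) * d * D + 1 := by rw [hN]; ring
        _ ≤ (n + 1) * d * D + D := by omega
        _ = c * D := by rw [hc]; ring
    calc (N + 1) ^ n ≤ (c * D) ^ n := Nat.pow_le_pow_left h1 n
      _ = c ^ n * D ^ n := by rw [mul_pow]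
      _ < D * D ^ n := by
          have hDpos : 0 < D ^ n := by positivity
          have : c ^ n < D := by rw [hD]; omega
          exact (Nat.mul_lt_mul_right hDpos).mpr this
      _ = D ^ (n + 1) := by ring
  have : Fintype.card (Fin (n + 1) → Fin D) = D ^ (n + 1) := by
    rw [Fintype.card_fun, Fintype.card_fin, Fintype.card_fin]
  omega

theorem krullDim_mvPolynomial {K : Type*} [Field K] (n : ℕ) :
    (∀ x : Fin (n + 1) → MvPolynomial (Fin n) K,
      ∃ a : Fin (n + 1) → MvPolynomial (Fin n) K, ∃ m : Fin (n + 1) → ℕ,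
        nestedExpr (List.ofFn (fun i => (x i, a i, m i))) = 0) ∧
    ¬ (∃ a : Fin n → MvPolynomial (Fin n) K, ∃ m : Fin n → ℕ,
        nestedExpr (List.ofFn (fun i => (MvPolynomial.X i, a i, m i))) = 0) := by
  constructor
  · intro x
    obtain ⟨Q, hQ0, hQ⟩ := exists_annihilator n x
    obtain ⟨a, m, c, hc, hdec⟩ := key_decomp (n + 1) Q hQ0 x
    refine ⟨a, m, ?_⟩
    have h1 : algebraMap K (MvPolynomial (Fin n) K) c *
        nestedExpr (List.ofFn fun i => (x i, a i, m i)) = 0 := by rw [← hdec, hQ]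
    calc nestedExpr (List.ofFn fun i => (x i, a i, m i))
        = (algebraMap K (MvPolynomial (Fin n) K) c⁻¹ * algebraMap K (MvPolynomial (Fin n) K) c) *
            nestedExpr (List.ofFn fun i => (x i, a i, m i)) := by
          rw [← map_mul, inv_mul_cancel₀ hc, map_one, one_mul]
      _ = algebraMap K (MvPolynomial (Fin n) K) c⁻¹ *
            (algebraMap K (MvPolynomial (Fin n) K) c *
              nestedExpr (List.ofFn fun i => (x i, a i, m i))) := by ring
      _ = 0 := by rw [h1, mul_zero]
  · rintro ⟨a, m, h⟩
    have hL : (List.ofFn fun i : Fin n => ((X i : MvPolynomial (Fin n) K), a i, m i))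
        = (List.ofFn fun i : Fin n => (i, a i, m i)).map fun p => (X p.1, p.2.1, p.2.2) := by
      rw [List.map_ofFn]
      rfl
    rw [hL] at h
    refine nestedExpr_X_ne_zero _ ?_ h
    rw [List.map_ofFn]
    refine (List.nodup_ofFn).mpr fun i j hij => ?_
    exact hij
end

section
/- In the polynomial ring K[X₁,…,Xₙ] over a field K, the sequence X₁,…,Xₙ is pseudo regular: there do not exist a₁,…,aₙ ∈ K[X₁,…,Xₙ] and m₁,…,mₙ ∈ ℕ such that X₁^{m₁}(⋯(Xₙ^{mₙ}(1 + aₙXₙ) + ⋯) + a₁X₁) = 0. -/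
open MvPolynomial

lemma map_nestedExpr {K : Type*} [Field K] {n : ℕ}
    (f : MvPolynomial (Fin n) K →+* MvPolynomial (Fin n) K)
    (a : Fin n → MvPolynomial (Fin n) K) (m : Fin n → ℕ) :
    ∀ ℓ : List (Fin n), (∀ j ∈ ℓ, f (X j) = X j) →
      f (nestedExpr (ℓ.map fun i => (X i, a i, m i))) =
        nestedExpr (ℓ.map fun i => (X i, f (a i), m i)) := by
  intro ℓ
  induction ℓ with
  | nil => simp [nestedExpr]
  | cons i t ih =>
    intro h
    have hi : f (X i) = X i := h i (by simp)
    simp only [List.map_cons, nestedExpr, map_mul, map_add, map_pow, hi]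
    rw [ih (fun j hj => h j (by simp [hj]))]

lemma key_nestedExpr {K : Type*} [Field K] {n : ℕ} :
    ∀ ℓ : List (Fin n), ℓ.Nodup → ∀ (a : Fin n → MvPolynomial (Fin n) K) (m : Fin n → ℕ),
      nestedExpr (ℓ.map fun i => (X i, a i, m i)) ≠ 0 := by
  intro ℓ
  induction ℓ with
  | nil => intro _ a m; simp [nestedExpr]
  | cons i t ih =>
    intro hnd a m h
    simp only [List.map_cons, nestedExpr] at h
    have hx : (X i : MvPolynomial (Fin n) K) ^ m i ≠ 0 := pow_ne_zero _ (X_ne_zero i)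
    have h2 : nestedExpr (t.map fun j => (X j, a j, m j)) + a i * X i = 0 := by
      rcases mul_eq_zero.mp h with h' | h'
      · exact absurd h' hx
      · exact h'
    set σ : MvPolynomial (Fin n) K →+* MvPolynomial (Fin n) K :=
      (aeval (Function.update X i (0 : MvPolynomial (Fin n) K))).toRingHom with hσ
    have hσi : σ (X i) = 0 := by simp [hσ]
    have hσj : ∀ j ∈ t, σ (X j) = X j := by
      intro j hj
      have : j ≠ i := fun e => (List.nodup_cons.mp hnd).1 (e ▸ hj)
      simp [hσ, Function.update_of_ne this]
    have h3 := congrArg σ h2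
    rw [map_add, map_mul, hσi, mul_zero, add_zero, map_zero,
      map_nestedExpr σ a m t hσj] at h3
    exact ih (List.nodup_cons.mp hnd).2 (fun j => σ (a j)) m h3

theorem variables_pseudo_regular {K : Type*} [Field K] (n : ℕ) :
    ¬ (∃ a : Fin n → MvPolynomial (Fin n) K, ∃ m : Fin n → ℕ,
        nestedExpr (List.ofFn (fun i => (MvPolynomial.X i, a i, m i))) = 0) := by
  rintro ⟨a, m, h⟩
  have : List.ofFn (fun i => (MvPolynomial.X (R := K) i, a i, m i)) =
      (List.finRange n).map fun i => (MvPolynomial.X i, a i, m i) := by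
    simp [List.ofFn_eq_map]
  rw [this] at h
  exact key_nestedExpr (List.finRange n) (List.nodup_finRange n) a m h
end
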